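/- Let [s_0, ..., s_n] be an admissible list of integers with NCF value v (so v < 0). Then the list [−1, s_0 − 1, s_1, ..., s_n] is also admissible and its NCF value equals v/(1 − v). Consequently, if s > 0 is rational and −1/s is the NCF value of [s_0, ..., s_n], then −1/(s+1) is the NCF value of [−1, s_0 − 1, s_1, ..., s_n], and the associated products agree: |(−1)·((s_0 − 1) + 1)·(s_1 + 1)···(s_n + 1)| = |s_0·(s_1 + 1)···(s_n + 1)|. -/

import Mathlib

/-- The negative continued fraction (NCF) value of a list of integers:
`ncfVal [rₙ] = rₙ` and `ncfVal (rₖ :: l) = rₖ - 1 / ncfVal l`.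
(Junk value `0` for the empty list; recall division by zero in `ℚ` is `0`,
so the value is "well defined" precisely when all proper tails have nonzero value.) -/
def ncfVal : List ℤ → ℚ
  | [] => 0
  | [r] => (r : ℚ)
  | r :: s :: l => (r : ℚ) - 1 / ncfVal (s :: l)

/-- A list `[r₀, …, rₙ]` is admissible if `r₀ ≤ -1` and `rᵢ ≤ -2` for `1 ≤ i ≤ n`. -/
def Admissible : List ℤ → Prop
  | [] => False
  | r :: l => r ≤ -1 ∧ ∀ s ∈ l, s ≤ -2

lemma ncfVal_cons (r : ℤ) (l : List ℤ) :
    ncfVal (r :: l) = (r : ℚ) - 1 / ncfVal l := by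
  cases l with
  | nil => simp [ncfVal]
  | cons a t => rfl

lemma ncfVal_lt_neg_one : ∀ l : List ℤ, l ≠ [] → (∀ s ∈ l, s ≤ -2) →
    ncfVal l < -1 := by
  intro l
  induction l with
  | nil => simp
  | cons r t ih =>
    intro _ hmem
    have hr : (r : ℚ) ≤ -2 := by exact_mod_cast hmem r (by simp)
    cases t with
    | nil => simpa [ncfVal] using lt_of_le_of_lt hr (by norm_num)
    | cons a t' =>
      have ht : ncfVal (a :: t') < -1 := by
        apply ih (by simp)
        intro s hs; exact hmem s (by simp [hs])
      have h0 : ncfVal (a :: t') < 0 := lt_trans ht (by norm_num)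
      have h1 : 1 / ncfVal (a :: t') > -1 := by
        rw [gt_iff_lt, lt_div_iff_of_neg h0]; linarith
      have h2 : 1 / ncfVal (a :: t') < 0 := div_neg_of_pos_of_neg one_pos h0
      rw [ncfVal_cons]
      linarith

theorem ncf_shift_expansion (s₀ : ℤ) (rest : List ℤ)
    (h : Admissible (s₀ :: rest)) :
    Admissible ((-1 : ℤ) :: (s₀ - 1) :: rest) ∧
    ncfVal ((-1 : ℤ) :: (s₀ - 1) :: rest) =
      ncfVal (s₀ :: rest) / (1 - ncfVal (s₀ :: rest)) ∧
    (∀ s : ℚ, 0 < s → ncfVal (s₀ :: rest) = -1 / s →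
      ncfVal ((-1 : ℤ) :: (s₀ - 1) :: rest) = -1 / (s + 1)) ∧
    |(-1 : ℤ) * ((s₀ - 1) + 1) * (rest.map (· + 1)).prod| =
      |s₀ * (rest.map (· + 1)).prod| := by
  obtain ⟨hs₀, hrest⟩ := h
  -- v < 0
  set v := ncfVal (s₀ :: rest) with hv
  have hvneg : v < 0 := by
    rw [hv, ncfVal_cons]
    have hs₀' : (s₀ : ℚ) ≤ -1 := by exact_mod_cast hs₀
    cases rest with
    | nil => simp [ncfVal]; linarith
    | cons a t =>
      have ht : ncfVal (a :: t) < -1 := ncfVal_lt_neg_one _ (by simp) hrest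
      have h0 : ncfVal (a :: t) < 0 := lt_trans ht (by norm_num)
      have h1 : 1 / ncfVal (a :: t) > -1 := by
        rw [gt_iff_lt, lt_div_iff_of_neg h0]; linarith
      linarith
  have hkey : ncfVal ((s₀ - 1) :: rest) = v - 1 := by
    rw [ncfVal_cons, hv, ncfVal_cons]; push_cast; ring
  have hv1 : v - 1 ≠ 0 := by linarith
  have hval : ncfVal ((-1 : ℤ) :: (s₀ - 1) :: rest) = v / (1 - v) := by
    rw [ncfVal_cons, hkey]
    have h1v : (1 : ℚ) - v ≠ 0 := by intro hc; apply hv1; linarith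
    field_simp
    ring
  refine ⟨⟨by norm_num, ?_⟩, hval, ?_, ?_⟩
  · intro s hs
    rw [List.mem_cons] at hs
    rcases hs with hs | hs
    · omega
    · exact hrest s hs
  · intro s hspos hseq
    rw [hval, hseq]
    have hs0 : s ≠ 0 := ne_of_gt hspos
    have hs1 : s + 1 ≠ 0 := by positivity
    field_simp
    rw [sub_neg_eq_add, div_self hs1]
  · have : (-1 : ℤ) * ((s₀ - 1) + 1) * (rest.map (· + 1)).prod
        = -(s₀ * (rest.map (· + 1)).prod) := by ring
    rw [this, abs_neg]
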